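/- Let d ≥ 1, let Γ be a nonempty set of proper 4-colorings of Q_d, and let f be uniformly distributed on Γ. Then log₂|Γ| ≤ ∑_{u ∈ O} T_Γ(u), where T_Γ(u) = (1/d)·H(f_{N_u}) + H(f_u | f(N_u)) and O is the set of odd vertices of Q_d. -/

import Mathlib

open Finset

abbrev V (d : ℕ) : Type := Fin d → Bool

def cube (d : ℕ) : SimpleGraph (V d) where
  Adj u v := (Finset.univ.filter fun i => u i ≠ v i).card = 1
  symm := by
    constructor
    intro u v h
    have e : (Finset.univ.filter fun i => v i ≠ u i) = (Finset.univ.filter fun i => u i ≠ v i) := by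
      apply Finset.filter_congr
      intro i _
      exact ne_comm
    rw [e]
    exact h
  loopless := by
    constructor
    intro u h
    simp at h

instance cubeAdjDecidable (d : ℕ) : DecidableRel (cube d).Adj := fun u v =>
  decidable_of_iff ((Finset.univ.filter fun i => u i ≠ v i).card = 1) Iff.rfl

/-- a vertex of the hypercube is even if it has an even number of `true` coordinates. -/
def isEven {d : ℕ} (v : V d) : Prop := Even (Finset.univ.filter fun i => v i = true).card

/-- `f` is a proper `q`-coloring of the `d`-dimensional hypercube. -/
def IsColoring (d q : ℕ) (f : V d → Fin q) : Prop :=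
  ∀ u v : V d, (cube d).Adj u v → f u ≠ f v

open scoped Classical in
/-- The probability that the random variable `X` (on the finite probability space `(Ω, p)`)
takes the value `t`. -/
noncomputable def pr {Ω T : Type*} [Fintype Ω] (p : Ω → ℝ) (X : Ω → T) (t : T) : ℝ :=
  ∑ ω : Ω, if X ω = t then p ω else 0

/-- The binary (Shannon) entropy `H(X) = ∑_t P(X = t) log₂ (1 / P(X = t))`. -/
noncomputable def ent {Ω T : Type*} [Fintype Ω] [Fintype T] (p : Ω → ℝ) (X : Ω → T) : ℝ :=
  ∑ t : T, pr p X t * Real.logb 2 (pr p X t)⁻¹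

/-- The conditional entropy
`H(X | Y) = ∑_u P(Y = u) ∑_t P(X = t | Y = u) log₂ (1 / P(X = t | Y = u))`. -/
noncomputable def condEnt {Ω T U : Type*} [Fintype Ω] [Fintype T] [Fintype U]
    (p : Ω → ℝ) (X : Ω → T) (Y : Ω → U) : ℝ :=
  ∑ u : U, pr p Y u *
    ∑ t : T, (pr p (fun ω => (X ω, Y ω)) (t, u) / pr p Y u) *
      Real.logb 2 ((pr p (fun ω => (X ω, Y ω)) (t, u) / pr p Y u))⁻¹

/-- `T_p(u) = (1/d) H(f_{N_u}) + H(f_u | f(N_u))`, where `f` is a random coloring with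
distribution `p`, `f_{N_u}` is the restriction of `f` to the neighborhood of `u`, and
`f(N_u)` is the set of colors appearing on the neighborhood of `u`. -/
noncomputable def Tp (d : ℕ) (p : (V d → Fin 4) → ℝ) (u : V d) : ℝ :=
  (1 / (d : ℝ)) * ent p (fun f => fun v : {v : V d // (cube d).Adj u v} => f v.1) +
    condEnt p (fun f => f u)
      (fun f => Finset.image (fun v : {v : V d // (cube d).Adj u v} => f v.1) Finset.univ)

/-- The uniform distribution on the finite set `Γ` of colorings. -/
noncomputable def unif (d : ℕ) (Γ : Finset (V d → Fin 4)) : (V d → Fin 4) → ℝ :=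
  fun f => if f ∈ Γ then ((Γ.card : ℝ))⁻¹ else 0


noncomputable def phi (x : ℝ) : ℝ := x * Real.logb 2 x⁻¹

lemma phi_zero : phi 0 = 0 := by simp [phi]

lemma phi_one : phi 1 = 0 := by simp [phi]

lemma phi_eq (x : ℝ) : phi x = (Real.log 2)⁻¹ • Real.negMulLog x := by
  unfold phi Real.negMulLog Real.logb
  rw [Real.log_inv]
  simp only [smul_eq_mul]
  ring

lemma phi_nonneg {x : ℝ} (h0 : 0 ≤ x) (h1 : x ≤ 1) : 0 ≤ phi x := by
  rcases eq_or_lt_of_le h0 with h | h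
  · simp [← h, phi]
  · apply mul_nonneg h.le
    have hx : (1:ℝ) ≤ x⁻¹ := by
      rw [← one_div]
      exact (one_le_div h).mpr h1
    exact Real.logb_nonneg one_lt_two hx

lemma concaveOn_phi : ConcaveOn ℝ (Set.Ici 0) phi := by
  have h := Real.concaveOn_negMulLog.smul
    (c := (Real.log 2)⁻¹) (by positivity)
  have hfun : phi = fun x => (Real.log 2)⁻¹ • Real.negMulLog x := funext phi_eq
  rw [hfun]
  exact h

section Entropy

open scoped Classical

variable {Ω T U W : Type*} [Fintype Ω] [Fintype T] [Fintype U] [Fintype W]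
variable {p : Ω → ℝ} {X : Ω → T} {Y : Ω → U}

lemma pr_nonneg (hp : ∀ ω, 0 ≤ p ω) (X : Ω → T) (t : T) : 0 ≤ pr p X t := by
  apply Finset.sum_nonneg
  intro ω _
  split <;> simp [hp ω]

lemma pr_le_one (hp : ∀ ω, 0 ≤ p ω) (hp1 : ∑ ω, p ω = 1) (X : Ω → T) (t : T) :
    pr p X t ≤ 1 := by
  rw [← hp1]
  apply Finset.sum_le_sum
  intro ω _
  split <;> simp [hp ω]

lemma ent_eq (X : Ω → T) : ent p X = ∑ t : T, phi (pr p X t) := rfl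

lemma condEnt_eq (X : Ω → T) (Y : Ω → U) :
    condEnt p X Y = ∑ u : U, ∑ t : T,
      pr p Y u * phi (pr p (fun ω => (X ω, Y ω)) (t, u) / pr p Y u) := by
  unfold condEnt phi
  refine Finset.sum_congr rfl fun u _ => ?_
  rw [Finset.mul_sum]

/-- relabeling by an injection preserves entropy -/
lemma ent_comp_inj {T' : Type*} [Fintype T'] {σ : T → T'} (hσ : Function.Injective σ)
    (X : Ω → T) : ent p (fun ω => σ (X ω)) = ent p X := by
  have hval : ∀ t, pr p (fun ω => σ (X ω)) (σ t) = pr p X t := by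
    intro t
    unfold pr
    exact Finset.sum_congr rfl fun ω _ => if_congr hσ.eq_iff rfl rfl
  have hzero : ∀ t', t' ∉ Finset.univ.image σ → pr p (fun ω => σ (X ω)) t' = 0 := by
    intro t' ht'
    apply Finset.sum_eq_zero
    intro ω _
    exact if_neg fun h => ht' (Finset.mem_image.mpr ⟨X ω, Finset.mem_univ _, h⟩)
  rw [ent_eq, ent_eq]
  rw [← Finset.sum_subset (Finset.subset_univ (Finset.univ.image σ))
    (fun t' _ ht' => by rw [hzero t' ht', phi_zero])]
  rw [Finset.sum_image (fun a _ b _ h => hσ h)]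
  exact Finset.sum_congr rfl fun t _ => by rw [hval]

/-- marginalization -/
lemma pr_marg (X : Ω → T) (Y : Ω → U) (u : U) :
    ∑ t : T, pr p (fun ω => (X ω, Y ω)) (t, u) = pr p Y u := by
  unfold pr
  rw [Finset.sum_comm]
  refine Finset.sum_congr rfl fun ω _ => ?_
  beta_reduce
  by_cases hy : Y ω = u
  · rw [if_pos hy]
    refine (Finset.sum_eq_single_of_mem (X ω) (Finset.mem_univ _)
      (fun t _ ht => if_neg (fun hc => ht (congrArg Prod.fst hc).symm))).trans ?_
    exact if_pos (by rw [hy])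
  · rw [if_neg hy]
    apply Finset.sum_eq_zero
    intro t _
    apply if_neg
    intro hc
    exact hy (congrArg Prod.snd hc)

lemma pr_pair_le (hp : ∀ ω, 0 ≤ p ω) (X : Ω → T) (Y : Ω → U) (t : T) (u : U) :
    pr p (fun ω => (X ω, Y ω)) (t, u) ≤ pr p Y u := by
  rw [← pr_marg X Y u]
  exact Finset.single_le_sum (fun t' _ => pr_nonneg hp (fun ω => (X ω, Y ω)) (t', u)) (Finset.mem_univ t)

/-- Chain rule: `H(X,Y) = H(Y) + H(X|Y)`. -/
lemma chainRule (hp : ∀ ω, 0 ≤ p ω) (X : Ω → T) (Y : Ω → U) :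
    ent p (fun ω => (X ω, Y ω)) = ent p Y + condEnt p X Y := by
  rw [ent_eq, ent_eq, condEnt_eq]
  rw [Fintype.sum_prod_type, Finset.sum_comm, ← Finset.sum_add_distrib]
  refine Finset.sum_congr rfl fun u _ => ?_
  set R := pr p Y u with hR
  have hR0 : 0 ≤ R := pr_nonneg hp _ _
  have hQ0 : ∀ t, 0 ≤ pr p (fun ω => (X ω, Y ω)) (t, u) := fun t => pr_nonneg hp _ _
  have hQR : ∀ t, pr p (fun ω => (X ω, Y ω)) (t, u) ≤ R := fun t => pr_pair_le hp X Y t u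
  rcases eq_or_lt_of_le hR0 with h0 | hpos
  · have hz : ∀ t, pr p (fun ω => (X ω, Y ω)) (t, u) = 0 :=
      fun t => le_antisymm (h0 ▸ hQR t) (hQ0 t)
    simp [← h0, hz, phi_zero]
  · have key : ∀ t, R * phi (pr p (fun ω => (X ω, Y ω)) (t, u) / R)
        = phi (pr p (fun ω => (X ω, Y ω)) (t, u))
          - pr p (fun ω => (X ω, Y ω)) (t, u) * Real.logb 2 R⁻¹ := by
      intro t
      set Q := pr p (fun ω => (X ω, Y ω)) (t, u) with hQdef
      rcases eq_or_lt_of_le (hQ0 t) with hq0 | hqpos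
      · have hq : Q = 0 := hq0.symm
        rw [hq, zero_div, phi_zero, zero_mul, mul_zero, sub_zero]
      · have hRne : R ≠ 0 := ne_of_gt hpos
        have hQne : Q ≠ 0 := ne_of_gt hqpos
        unfold phi
        rw [inv_div, Real.logb_div hRne hQne]
        simp only [Real.logb_inv]
        field_simp
        ring
    calc ∑ t : T, phi (pr p (fun ω => (X ω, Y ω)) (t, u))
        = ∑ t : T, (R * phi (pr p (fun ω => (X ω, Y ω)) (t, u) / R)
            + pr p (fun ω => (X ω, Y ω)) (t, u) * Real.logb 2 R⁻¹) := by
          refine Finset.sum_congr rfl fun t _ => ?_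
          rw [key t]; ring
      _ = phi R + ∑ t : T, R * phi (pr p (fun ω => (X ω, Y ω)) (t, u) / R) := by
          rw [Finset.sum_add_distrib, ← Finset.sum_mul, pr_marg X Y u, add_comm]
          rfl

end Entropy

section Entropy2

open scoped Classical

variable {Ω T U W : Type*} [Fintype Ω] [Fintype T] [Fintype U] [Fintype W]
variable {p : Ω → ℝ}

lemma ent_nonneg (hp : ∀ ω, 0 ≤ p ω) (hp1 : ∑ ω, p ω = 1) (X : Ω → T) : 0 ≤ ent p X := by
  rw [ent_eq]
  exact Finset.sum_nonneg fun t _ => phi_nonneg (pr_nonneg hp X t) (pr_le_one hp hp1 X t)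

lemma condEnt_nonneg (hp : ∀ ω, 0 ≤ p ω) (X : Ω → T) (Y : Ω → U) : 0 ≤ condEnt p X Y := by
  rw [condEnt_eq]
  refine Finset.sum_nonneg fun u _ => Finset.sum_nonneg fun t _ => ?_
  have hR0 : 0 ≤ pr p Y u := pr_nonneg hp Y u
  apply mul_nonneg hR0
  have hQ0 : 0 ≤ pr p (fun ω => (X ω, Y ω)) (t, u) := pr_nonneg hp _ _
  have hQR := pr_pair_le hp X Y t u
  rcases eq_or_lt_of_le hR0 with h0 | hpos
  · rw [← h0, div_zero]; exact le_of_eq phi_zero.symm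
  · exact phi_nonneg (by positivity) (div_le_one_of_le₀ hQR hR0)

/-- The key Jensen step. -/
lemma sum_mul_phi_le {ι : Type*} (s : Finset ι) (r q : ι → ℝ)
    (hr : ∀ i ∈ s, 0 ≤ r i) (hq : ∀ i ∈ s, 0 ≤ q i) (hqr : ∀ i ∈ s, q i ≤ r i) :
    ∑ i ∈ s, r i * phi (q i / r i) ≤ (∑ i ∈ s, r i) * phi ((∑ i ∈ s, q i) / (∑ i ∈ s, r i)) := by
  set R := ∑ i ∈ s, r i with hRdef
  have hR0 : 0 ≤ R := Finset.sum_nonneg hr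
  rcases eq_or_lt_of_le hR0 with h0 | hpos
  · have hz : ∀ i ∈ s, r i = 0 := (Finset.sum_eq_zero_iff_of_nonneg hr).mp h0.symm
    rw [← h0, zero_mul]
    apply le_of_eq
    apply Finset.sum_eq_zero
    intro i hi
    rw [hz i hi, zero_mul]
  · have key := concaveOn_phi.le_map_sum (t := s) (w := fun i => r i / R)
      (p := fun i => q i / r i)
      (fun i hi => div_nonneg (hr i hi) hR0)
      (by rw [← Finset.sum_div]; exact div_self (ne_of_gt hpos))
      (fun i hi => Set.mem_Ici.mpr (div_nonneg (hq i hi) (hr i hi)))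
    have hx : ∀ i ∈ s, (r i / R) • (q i / r i) = q i / R := by
      intro i hi
      rcases eq_or_lt_of_le (hr i hi) with h | h
      · have : q i = 0 := le_antisymm (h ▸ hqr i hi) (hq i hi)
        rw [this, ← h]
        simp
      · rw [smul_eq_mul]
        field_simp
        try ring
    rw [Finset.sum_congr rfl hx, ← Finset.sum_div] at key
    have key2 : ∑ i ∈ s, (r i / R) • phi (q i / r i) =
        R⁻¹ * ∑ i ∈ s, r i * phi (q i / r i) := by
      rw [Finset.mul_sum]
      refine Finset.sum_congr rfl fun i hi => ?_
      rw [smul_eq_mul]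
      field_simp
      try ring
    rw [key2] at key
    calc ∑ i ∈ s, r i * phi (q i / r i)
        = R * (R⁻¹ * ∑ i ∈ s, r i * phi (q i / r i)) := by
          field_simp
      _ ≤ R * phi ((∑ i ∈ s, q i) / R) :=
          mul_le_mul_of_nonneg_left key hR0

/-- pushing forward the conditioning variable can only increase conditional entropy -/
lemma pr_comp_eq (Z : Ω → U) (g : U → W) (w : W) :
    pr p (fun ω => g (Z ω)) w = ∑ u ∈ Finset.univ.filter (fun u => g u = w), pr p Z u := by
  unfold pr
  rw [Finset.sum_comm]
  refine Finset.sum_congr rfl fun ω _ => ?_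
  symm
  by_cases hw : g (Z ω) = w
  · rw [if_pos hw]
    have hmem : Z ω ∈ Finset.univ.filter (fun u => g u = w) :=
      Finset.mem_filter.mpr ⟨Finset.mem_univ _, hw⟩
    refine (Finset.sum_eq_single_of_mem (Z ω) hmem
      (fun u _ hu => if_neg fun hc => hu hc.symm)).trans ?_
    exact if_pos rfl
  · rw [if_neg hw]
    apply Finset.sum_eq_zero
    intro u hu
    exact if_neg fun hc : Z ω = u => hw (hc ▸ (Finset.mem_filter.mp hu).2)

lemma pr_pair_comp_eq (X : Ω → T) (Y : Ω → U) (g : U → W) (t : T) (w : W) :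
    pr p (fun ω => (X ω, g (Y ω))) (t, w) =
      ∑ u ∈ Finset.univ.filter (fun u => g u = w), pr p (fun ω => (X ω, Y ω)) (t, u) := by
  unfold pr
  rw [Finset.sum_comm]
  refine Finset.sum_congr rfl fun ω _ => ?_
  beta_reduce
  symm
  by_cases hx : X ω = t
  · by_cases hw : g (Y ω) = w
    · rw [if_pos (by rw [hx, hw])]
      have hmem : Y ω ∈ Finset.univ.filter (fun u => g u = w) :=
        Finset.mem_filter.mpr ⟨Finset.mem_univ _, hw⟩
      refine (Finset.sum_eq_single_of_mem (Y ω) hmem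
        (fun u _ hu => if_neg fun hc => hu (congrArg Prod.snd hc).symm)).trans ?_
      exact if_pos (by rw [hx])
    · rw [if_neg (fun hc => hw (congrArg Prod.snd hc))]
      apply Finset.sum_eq_zero
      intro u hu
      refine if_neg fun hc : (X ω, Y ω) = (t, u) => ?_
      have h2 : Y ω = u := congrArg Prod.snd hc
      exact hw (h2 ▸ (Finset.mem_filter.mp hu).2)
  · rw [if_neg (fun hc => hx (congrArg Prod.fst hc))]
    apply Finset.sum_eq_zero
    intro u hu
    exact if_neg fun hc => hx (congrArg Prod.fst hc)

lemma condEnt_comp_le (hp : ∀ ω, 0 ≤ p ω) (X : Ω → T) (Y : Ω → U) (g : U → W) :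
    condEnt p X Y ≤ condEnt p X (fun ω => g (Y ω)) := by
  rw [condEnt_eq, condEnt_eq]
  rw [Finset.sum_comm]
  conv_rhs => rw [Finset.sum_comm]
  apply Finset.sum_le_sum
  intro t _
  have hsplit : ∀ F : U → ℝ, ∑ u : U, F u =
      ∑ w : W, ∑ u ∈ Finset.univ.filter (fun u => g u = w), F u :=
    fun F => (Finset.sum_fiberwise Finset.univ g F).symm
  rw [hsplit (fun u => pr p Y u * phi (pr p (fun ω => (X ω, Y ω)) (t, u) / pr p Y u))]
  apply Finset.sum_le_sum
  intro w _
  have hj := sum_mul_phi_le (Finset.univ.filter (fun u => g u = w))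
    (fun u => pr p Y u) (fun u => pr p (fun ω => (X ω, Y ω)) (t, u))
    (fun u _ => pr_nonneg hp Y u)
    (fun u _ => pr_nonneg hp (fun ω => (X ω, Y ω)) (t, u))
    (fun u _ => pr_pair_le hp X Y t u)
  rw [← pr_comp_eq Y g w, ← pr_pair_comp_eq X Y g t w] at hj
  exact hj

end Entropy2

set_option maxHeartbeats 1000000 in
noncomputable def Res (d : ℕ) (S : Finset (V d)) : (V d → Fin 4) → ({v : V d // v ∈ S} → Fin 4) :=
  fun f v => f v.1

noncomputable def nbrF (d : ℕ) (u : V d) : Finset (V d) :=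
  Finset.univ.filter fun v => (cube d).Adj u v

section App

open scoped Classical

variable {d : ℕ} {p : (V d → Fin 4) → ℝ}

lemma ent_res_insert (hp : ∀ ω, 0 ≤ p ω) {v : V d} {S : Finset (V d)} (hv : v ∉ S) :
    ent p (Res d (insert v S)) = ent p (Res d S) + condEnt p (fun f => f v) (Res d S) := by
  have hmem : ∀ w : {w : V d // w ∈ insert v S}, w.1 ≠ v → w.1 ∈ S := by
    intro w hw
    rcases Finset.mem_insert.mp w.2 with h | h
    · exact absurd h hw
    · exact h
  set σ : Fin 4 × ({w : V d // w ∈ S} → Fin 4) → ({w : V d // w ∈ insert v S} → Fin 4) :=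
    fun a w => if h : w.1 = v then a.1 else a.2 ⟨w.1, hmem w h⟩ with hσ
  have hinj : Function.Injective σ := by
    intro a b hab
    have h1 : a.1 = b.1 := by
      have := congrFun hab ⟨v, Finset.mem_insert_self v S⟩
      simpa [hσ] using this
    have h2 : a.2 = b.2 := by
      funext w
      have hne : (w.1 : V d) ≠ v := fun h => hv (h ▸ w.2)
      have := congrFun hab ⟨w.1, Finset.mem_insert_of_mem w.2⟩
      simpa [hσ, hne] using this
    exact Prod.ext h1 h2
  have heq : Res d (insert v S) = fun f => σ (f v, Res d S f) := by
    funext f w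
    by_cases h : w.1 = v
    · simp [hσ, Res, h]
    · simp [hσ, Res, h]
  rw [heq, ent_comp_inj hinj (fun f => (f v, Res d S f)), chainRule hp (fun f => f v) (Res d S)]

set_option maxHeartbeats 1000000 in
lemma condEnt_res_insert {U' : Type*} [Fintype U'] (hp : ∀ ω, 0 ≤ p ω) {v : V d}
    {S : Finset (V d)} (hv : v ∉ S) (Y : (V d → Fin 4) → U') :
    condEnt p (Res d (insert v S)) Y =
      condEnt p (Res d S) Y + condEnt p (fun f => f v) (fun f => (Res d S f, Y f)) := by
  have hmem : ∀ w : {w : V d // w ∈ insert v S}, w.1 ≠ v → w.1 ∈ S := by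
    intro w hw
    rcases Finset.mem_insert.mp w.2 with h | h
    · exact absurd h hw
    · exact h
  set σ : Fin 4 × ({w : V d // w ∈ S} → Fin 4) → ({w : V d // w ∈ insert v S} → Fin 4) :=
    fun a w => if h : w.1 = v then a.1 else a.2 ⟨w.1, hmem w h⟩ with hσ
  have hinj : Function.Injective σ := by
    intro a b hab
    have h1 : a.1 = b.1 := by
      have := congrFun hab ⟨v, Finset.mem_insert_self v S⟩
      simpa [hσ] using this
    have h2 : a.2 = b.2 := by
      funext w
      have hne : (w.1 : V d) ≠ v := fun h => hv (h ▸ w.2)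
      have := congrFun hab ⟨w.1, Finset.mem_insert_of_mem w.2⟩
      simpa [hσ, hne] using this
    exact Prod.ext h1 h2
  set τ : Fin 4 × (({w : V d // w ∈ S} → Fin 4) × U') →
      ({w : V d // w ∈ insert v S} → Fin 4) × U' :=
    fun x => (σ (x.1, x.2.1), x.2.2) with hτ
  have hτinj : Function.Injective τ := by
    intro a b hab
    have hab' : (σ (a.1, a.2.1), a.2.2) = (σ (b.1, b.2.1), b.2.2) := hab
    have h13 := Prod.ext_iff.mp hab'
    have h1 : σ (a.1, a.2.1) = σ (b.1, b.2.1) := h13.1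
    have h3 : a.2.2 = b.2.2 := h13.2
    have h24 := Prod.ext_iff.mp (hinj h1)
    have h4 : a.1 = b.1 := h24.1
    have h5 : a.2.1 = b.2.1 := h24.2
    exact Prod.ext h4 (Prod.ext h5 h3)
  have heq : (fun f => (Res d (insert v S) f, Y f)) =
      fun f => τ (f v, (Res d S f, Y f)) := by
    funext f
    refine Prod.ext ?_ rfl
    show Res d (insert v S) f = σ (f v, Res d S f)
    funext w
    by_cases h : w.1 = v
    · simp [hσ, Res, h]
    · simp [hσ, Res, h]
  have h1 := chainRule hp (Res d (insert v S)) Y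
  have h2 := chainRule hp (Res d S) Y
  have h3 := chainRule hp (fun f => f v) (fun f => (Res d S f, Y f))
  have h4 : ent p (fun f => (Res d (insert v S) f, Y f)) =
      ent p (fun f => (f v, (Res d S f, Y f))) := by
    rw [heq]
    exact ent_comp_inj hτinj _
  linarith [h1, h2, h3, h4]

lemma condEnt_res_empty {U' : Type*} [Fintype U'] (hp : ∀ ω, 0 ≤ p ω)
    (Y : (V d → Fin 4) → U') : condEnt p (Res d (∅ : Finset (V d))) Y = 0 := by
  set σ : U' → ({w : V d // w ∈ (∅ : Finset (V d))} → Fin 4) × U' :=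
    fun y => (fun w => absurd w.2 (Finset.notMem_empty w.1), y) with hσ
  have hinj : Function.Injective σ := fun a b hab => congrArg Prod.snd hab
  have heq : (fun f => (Res d (∅ : Finset (V d)) f, Y f)) = fun f => σ (Y f) := by
    funext f
    refine Prod.ext ?_ rfl
    funext w
    exact absurd w.2 (Finset.notMem_empty w.1)
  have h1 := chainRule hp (Res d (∅ : Finset (V d))) Y
  rw [heq, ent_comp_inj hinj Y] at h1
  linarith

lemma ent_res_empty (hp1 : ∑ ω, p ω = 1) : ent p (Res d (∅ : Finset (V d))) = 0 := by
  rw [ent_eq]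
  apply Finset.sum_eq_zero
  intro t _
  have h1 : pr p (Res d (∅ : Finset (V d))) t = 1 := by
    unfold pr
    rw [← hp1]
    refine Finset.sum_congr rfl fun ω _ => ?_
    rw [if_pos]
    funext w
    exact absurd w.2 (Finset.notMem_empty w.1)
  rw [h1, phi_one]

lemma condEnt_res_mono (hp : ∀ ω, 0 ≤ p ω) {T : Type*} [Fintype T]
    {S S' : Finset (V d)} (hss : S ⊆ S') (X : (V d → Fin 4) → T) :
    condEnt p X (Res d S') ≤ condEnt p X (Res d S) := by
  have h := condEnt_comp_le hp X (Res d S')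
    (fun h : {v : V d // v ∈ S'} → Fin 4 => fun w : {v : V d // v ∈ S} => h ⟨w.1, hss w.2⟩)
  exact h

lemma condEnt_res_le_sum (hp : ∀ ω, 0 ≤ p ω) {U' : Type*} [Fintype U']
    (Y : (V d → Fin 4) → U') (S : Finset (V d)) :
    condEnt p (Res d S) Y ≤ ∑ v ∈ S, condEnt p (fun f => f v) Y := by
  induction S using Finset.induction_on with
  | empty => rw [condEnt_res_empty hp Y, Finset.sum_empty]
  | @insert v S hv ih =>
      rw [condEnt_res_insert hp hv Y, Finset.sum_insert hv]
      have h1 : condEnt p (fun f => f v) (fun f => (Res d S f, Y f)) ≤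
          condEnt p (fun f => f v) Y := by
        have h := condEnt_comp_le hp (fun f => f v) (fun f => (Res d S f, Y f)) Prod.snd
        exact h
      linarith

lemma shearer (hp : ∀ ω, 0 ≤ p ω) (hp1 : ∑ ω, p ω = 1) (k : ℕ) (U : Finset (V d)) :
    ∀ (I : Finset (V d)) (A : V d → Finset (V d)), (∀ i ∈ I, A i ⊆ U) →
      (∀ v ∈ U, k ≤ (I.filter (fun i => v ∈ A i)).card) →
      (k : ℝ) * ent p (Res d U) ≤ ∑ i ∈ I, ent p (Res d (A i)) := by
  induction U using Finset.induction_on with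
  | empty =>
      intro I A hA hk
      rw [ent_res_empty hp1, mul_zero]
      exact Finset.sum_nonneg fun i _ => ent_nonneg hp hp1 _
  | @insert v U' hv ih =>
      intro I A hA hk
      have hA' : ∀ i ∈ I, (A i).erase v ⊆ U' := by
        intro i hi w hw
        have h1 := Finset.mem_erase.mp hw
        rcases Finset.mem_insert.mp (hA i hi h1.2) with h | h
        · exact absurd h h1.1
        · exact h
      have hk' : ∀ w ∈ U', k ≤ (I.filter (fun i => w ∈ (A i).erase v)).card := by
        intro w hw
        have heqf : I.filter (fun i => w ∈ (A i).erase v) = I.filter (fun i => w ∈ A i) := by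
          apply Finset.filter_congr
          intro i _
          constructor
          · intro h; exact (Finset.mem_erase.mp h).2
          · intro h; exact Finset.mem_erase.mpr ⟨fun he => hv (he ▸ hw), h⟩
        rw [heqf]
        exact hk w (Finset.mem_insert_of_mem hw)
      have hIH := ih I (fun i => (A i).erase v) hA' hk'
      have hdecomp : ∀ i ∈ I, ent p (Res d (A i)) =
          ent p (Res d ((A i).erase v)) +
            (if v ∈ A i then condEnt p (fun f => f v) (Res d ((A i).erase v)) else 0) := by
        intro i hi
        by_cases hvi : v ∈ A i
        · rw [if_pos hvi]
          conv_lhs => rw [← Finset.insert_erase hvi]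
          rw [ent_res_insert hp (Finset.notMem_erase v (A i))]
        · rw [if_neg hvi, Finset.erase_eq_of_notMem hvi, add_zero]
      have hsum : ∑ i ∈ I, ent p (Res d (A i)) =
          (∑ i ∈ I, ent p (Res d ((A i).erase v))) +
            ∑ i ∈ I.filter (fun i => v ∈ A i),
              condEnt p (fun f => f v) (Res d ((A i).erase v)) := by
        rw [Finset.sum_congr rfl hdecomp, Finset.sum_add_distrib, Finset.sum_filter]
      set c := condEnt p (fun f => f v) (Res d U') with hc
      have hc0 : 0 ≤ c := condEnt_nonneg hp _ _
      have hterm : ∀ i ∈ I.filter (fun i => v ∈ A i),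
          c ≤ condEnt p (fun f => f v) (Res d ((A i).erase v)) := by
        intro i hi
        exact condEnt_res_mono hp (hA' i (Finset.mem_filter.mp hi).1) _
      have hcard : k ≤ (I.filter (fun i => v ∈ A i)).card := hk v (Finset.mem_insert_self v U')
      have hsum2 : (k : ℝ) * c ≤ ∑ i ∈ I.filter (fun i => v ∈ A i),
          condEnt p (fun f => f v) (Res d ((A i).erase v)) := by
        calc (k : ℝ) * c ≤ ((I.filter (fun i => v ∈ A i)).card : ℝ) * c := by
              apply mul_le_mul_of_nonneg_right _ hc0
              exact_mod_cast hcard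
          _ ≤ _ := by
              have h := Finset.card_nsmul_le_sum (I.filter (fun i => v ∈ A i))
                (fun i => condEnt p (fun f => f v) (Res d ((A i).erase v))) c hterm
              simpa [nsmul_eq_mul] using h
      rw [ent_res_insert hp hv, mul_add, hsum]
      exact add_le_add hIH hsum2

lemma adj_exists {u v : V d} (h : (cube d).Adj u v) :
    ∃ i, u i ≠ v i ∧ ∀ j, j ≠ i → u j = v j := by
  have h' : (Finset.univ.filter fun i => u i ≠ v i).card = 1 := h
  obtain ⟨i, hi⟩ := Finset.card_eq_one.mp h'
  have hmem : ∀ j, (u j ≠ v j) ↔ j ∈ ({i} : Finset (Fin d)) := by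
    intro j
    rw [← hi]
    simp
  refine ⟨i, ?_, ?_⟩
  · rw [hmem i]; simp
  · intro j hj
    by_contra hne
    have h2 := (hmem j).mp hne
    simp at h2
    exact hj h2

lemma adj_parity {u v : V d} (h : (cube d).Adj u v) : isEven v ↔ ¬ isEven u := by
  obtain ⟨i, hne, heq⟩ := adj_exists h
  unfold isEven
  cases hui : u i with
  | false =>
      have hvi : v i = true := by
        cases hv : v i
        · exact absurd (hui.trans hv.symm) hne
        · rfl
      have hset : (Finset.univ.filter fun j => v j = true) =
          insert i (Finset.univ.filter fun j => u j = true) := by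
        ext j
        simp only [Finset.mem_insert, Finset.mem_filter, Finset.mem_univ, true_and]
        by_cases hj : j = i
        · subst hj; simp [hvi]
        · rw [← heq j hj]; simp [hj]
      have hnotmem : i ∉ (Finset.univ.filter fun j => u j = true) := by simp [hui]
      rw [hset, Finset.card_insert_of_notMem hnotmem]
      exact Nat.even_add_one
  | true =>
      have hvi : v i = false := by
        cases hv : v i
        · rfl
        · exact absurd (hui.trans hv.symm) hne
      have hset : (Finset.univ.filter fun j => u j = true) =
          insert i (Finset.univ.filter fun j => v j = true) := by
        ext j
        simp only [Finset.mem_insert, Finset.mem_filter, Finset.mem_univ, true_and]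
        by_cases hj : j = i
        · subst hj; simp [hui]
        · rw [heq j hj]; simp [hj]
      have hnotmem : i ∉ (Finset.univ.filter fun j => v j = true) := by simp [hvi]
      rw [hset, Finset.card_insert_of_notMem hnotmem, Nat.even_add_one]
      tauto

lemma degree_eq (v : V d) : (Finset.univ.filter fun u => (cube d).Adj u v).card = d := by
  have himg : (Finset.univ.filter fun u => (cube d).Adj u v) =
      Finset.univ.image (fun i : Fin d => Function.update v i (!(v i))) := by
    ext u
    simp only [Finset.mem_filter, Finset.mem_univ, true_and, Finset.mem_image]
    constructor
    · intro h
      obtain ⟨i, hne, heq⟩ := adj_exists h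
      refine ⟨i, ?_⟩
      funext j
      rcases eq_or_ne j i with rfl | hj
      · rw [Function.update_self]
        revert hne; cases u j <;> cases v j <;> simp
      · rw [Function.update_of_ne hj]
        exact (heq j hj).symm
    · rintro ⟨i, -, rfl⟩
      show (Finset.univ.filter fun k => Function.update v i (!(v i)) k ≠ v k).card = 1
      have hseq : (Finset.univ.filter fun k => Function.update v i (!(v i)) k ≠ v k) = {i} := by
        ext k
        simp only [Finset.mem_filter, Finset.mem_univ, true_and, Finset.mem_singleton]
        rcases eq_or_ne k i with rfl | hk
        · simp [Function.update_self]
        · simp [Function.update_of_ne hk, hk]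
      rw [hseq, Finset.card_singleton]
  rw [himg]
  rw [Finset.card_image_of_injective _ ?inj, Finset.card_univ, Fintype.card_fin]
  case inj =>
    intro i j hij
    by_contra hne
    have h1 : Function.update v i (!(v i)) i = Function.update v j (!(v j)) i :=
      congrFun hij i
    rw [Function.update_self, Function.update_of_ne hne] at h1
    simp at h1

end App

open scoped Classical in
/-- For `f` uniform on a nonempty set `Γ` of proper 4-colorings of `Q_d`,
`log₂ |Γ| ≤ ∑_{u ∈ O} T_Γ(u)`. -/
theorem entropy_count_bound (d : ℕ) (hd : 1 ≤ d) (Γ : Finset (V d → Fin 4))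
    (hne : Γ.Nonempty) (hcol : ∀ f ∈ Γ, IsColoring d 4 f) :
    Real.logb 2 (Γ.card : ℝ) ≤
      ∑ u ∈ Finset.univ.filter (fun u : V d => ¬ isEven u), Tp d (unif d Γ) u := by
  set Ofin := Finset.univ.filter (fun u : V d => ¬ isEven u) with hOdef
  set Efin := Finset.univ.filter (fun u : V d => isEven u) with hEdef
  set p := unif d Γ with hpdef
  have hNpos : 0 < Γ.card := Finset.card_pos.mpr hne
  have hNne : (Γ.card : ℝ) ≠ 0 := by exact_mod_cast hNpos.ne'
  have hp : ∀ f, 0 ≤ p f := by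
    intro f
    rw [hpdef]
    unfold unif
    split
    · positivity
    · exact le_refl 0
  have hp1 : ∑ f, p f = 1 := by
    rw [hpdef]
    unfold unif
    rw [Finset.sum_ite_mem, Finset.univ_inter, Finset.sum_const, nsmul_eq_mul,
      mul_inv_cancel₀ hNne]
  -- entropy of the identity is log of the count
  have hpr_id : ∀ t, pr p (fun f => f) t = p t := by
    intro t
    unfold pr
    refine (Finset.sum_eq_single_of_mem t (Finset.mem_univ t)
      (fun b _ hb => if_neg hb)).trans ?_
    exact if_pos rfl
  have hent_id : ent p (fun f => f) = Real.logb 2 (Γ.card : ℝ) := by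
    rw [ent_eq]
    have h1 : ∀ t, phi (pr p (fun f => f) t) =
        if t ∈ Γ then phi ((Γ.card : ℝ))⁻¹ else 0 := by
      intro t
      rw [hpr_id t, hpdef]
      unfold unif
      split
      · rfl
      · exact phi_zero
    rw [Finset.sum_congr rfl (fun t _ => h1 t), Finset.sum_ite_mem, Finset.univ_inter,
      Finset.sum_const, nsmul_eq_mul]
    unfold phi
    rw [inv_inv, ← mul_assoc, mul_inv_cancel₀ hNne, one_mul]
  -- split into odd and even parts
  have hOE : ent p (fun f => f) = ent p (fun f => (Res d Ofin f, Res d Efin f)) := by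
    have hinj : Function.Injective
        (fun g : V d → Fin 4 => (Res d Ofin g, Res d Efin g)) := by
      intro a b hab
      funext w
      by_cases hw : isEven w
      · exact congrFun (congrArg Prod.snd hab)
          ⟨w, Finset.mem_filter.mpr ⟨Finset.mem_univ _, hw⟩⟩
      · exact congrFun (congrArg Prod.fst hab)
          ⟨w, Finset.mem_filter.mpr ⟨Finset.mem_univ _, hw⟩⟩
    exact (ent_comp_inj hinj (fun f => f)).symm
  -- Shearer's bound for the even part
  have hA : ∀ u ∈ Ofin, nbrF d u ⊆ Efin := by
    intro u hu w hw
    have hadj : (cube d).Adj u w := (Finset.mem_filter.mp hw).2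
    have huodd : ¬ isEven u := (Finset.mem_filter.mp hu).2
    exact Finset.mem_filter.mpr ⟨Finset.mem_univ _, (adj_parity hadj).mpr huodd⟩
  have hk : ∀ w ∈ Efin, d ≤ (Ofin.filter (fun u => w ∈ nbrF d u)).card := by
    intro w hw
    have hwE : isEven w := (Finset.mem_filter.mp hw).2
    have heqf : Ofin.filter (fun u => w ∈ nbrF d u) =
        Finset.univ.filter (fun u => (cube d).Adj u w) := by
      ext u
      constructor
      · intro h
        have h2 := (Finset.mem_filter.mp h).2
        exact Finset.mem_filter.mpr ⟨Finset.mem_univ _, (Finset.mem_filter.mp h2).2⟩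
      · intro h
        have hadj : (cube d).Adj u w := (Finset.mem_filter.mp h).2
        refine Finset.mem_filter.mpr ⟨?_, Finset.mem_filter.mpr ⟨Finset.mem_univ _, hadj⟩⟩
        rw [hOdef]
        exact Finset.mem_filter.mpr ⟨Finset.mem_univ _, (adj_parity hadj).mp hwE⟩
    rw [heqf, degree_eq w]
  have hsh := shearer hp hp1 d Efin Ofin (nbrF d) hA hk
  have hd0 : (0 : ℝ) < d := by exact_mod_cast hd
  have hEent : ent p (Res d Efin) ≤
      (1 / (d : ℝ)) * ∑ u ∈ Ofin, ent p (Res d (nbrF d u)) := by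
    rw [one_div, inv_mul_eq_div, le_div_iff₀ hd0]
    calc ent p (Res d Efin) * d = d * ent p (Res d Efin) := by ring
      _ ≤ _ := hsh
  -- subadditivity for the odd part
  have hsub : condEnt p (Res d Ofin) (Res d Efin) ≤
      ∑ u ∈ Ofin, condEnt p (fun f => f u) (Res d Efin) :=
    condEnt_res_le_sum hp (Res d Efin) Ofin
  -- the color set on the neighborhood is a function of the even part
  have hcond : ∀ u ∈ Ofin, condEnt p (fun f => f u) (Res d Efin) ≤
      condEnt p (fun f => f u)
        (fun f => Finset.image (fun v : {v : V d // (cube d).Adj u v} => f v.1)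
          Finset.univ) := by
    intro u hu
    have huodd : ¬ isEven u := (Finset.mem_filter.mp hu).2
    have hmemE : ∀ v : {v : V d // (cube d).Adj u v}, v.1 ∈ Efin :=
      fun v => Finset.mem_filter.mpr ⟨Finset.mem_univ _, (adj_parity v.2).mpr huodd⟩
    have h := condEnt_comp_le hp (fun f => f u) (Res d Efin)
      (fun h : {v : V d // v ∈ Efin} → Fin 4 =>
        Finset.image (fun v : {v : V d // (cube d).Adj u v} => h ⟨v.1, hmemE v⟩)
          Finset.univ)
    exact h
  -- per-vertex relabeling of the neighborhood entropy
  have hentnbr : ∀ u : V d, ent p (Res d (nbrF d u)) =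
      ent p (fun f => fun v : {v : V d // (cube d).Adj u v} => f v.1) := by
    intro u
    have hσinj : Function.Injective
        (fun (h : {v : V d // v ∈ nbrF d u} → Fin 4)
          (v : {v : V d // (cube d).Adj u v}) =>
            h ⟨v.1, Finset.mem_filter.mpr ⟨Finset.mem_univ _, v.2⟩⟩) := by
      intro a b hab
      funext w
      have hadj : (cube d).Adj u w.1 := (Finset.mem_filter.mp w.2).2
      exact congrFun hab ⟨w.1, hadj⟩
    exact (ent_comp_inj hσinj (Res d (nbrF d u))).symm
  calc Real.logb 2 (Γ.card : ℝ) = ent p (fun f => f) := hent_id.symm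
    _ = ent p (fun f => (Res d Ofin f, Res d Efin f)) := hOE
    _ = ent p (Res d Efin) + condEnt p (Res d Ofin) (Res d Efin) :=
        chainRule hp (Res d Ofin) (Res d Efin)
    _ ≤ (1 / (d : ℝ)) * ∑ u ∈ Ofin, ent p (Res d (nbrF d u)) +
        ∑ u ∈ Ofin, condEnt p (fun f => f u)
          (fun f => Finset.image (fun v : {v : V d // (cube d).Adj u v} => f v.1)
            Finset.univ) := by
        apply add_le_add hEent
        exact le_trans hsub (Finset.sum_le_sum hcond)
    _ = ∑ u ∈ Ofin, Tp d p u := by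
        rw [Finset.mul_sum, ← Finset.sum_add_distrib]
        refine Finset.sum_congr rfl fun u hu => ?_
        unfold Tp
        rw [hentnbr u]
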